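/- Let T be a tree and let G be a closed subgroup of Aut(T). Then G = G^{P_1} if and only if G has property P with respect to the edges of T. -/

import Mathlib

set_option linter.unusedSectionVars false
set_option maxHeartbeats 1000000

open SimpleGraph

variable {V : Type*}

/-- The automorphism group of a simple graph `T`, as a subgroup of `Equiv.Perm V`. -/
def SimpleGraph.autGroup (T : SimpleGraph V) : Subgroup (Equiv.Perm V) where
  carrier := {g : Equiv.Perm V | ∀ u v : V, T.Adj (g u) (g v) ↔ T.Adj u v}
  one_mem' := by intro u v; simp
  mul_mem' := by
    intro a b ha hb u v
    simpa using (ha (b u) (b v)).trans (hb u v)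
  inv_mem' := by
    intro a ha u v
    simpa using (ha (a⁻¹ u) (a⁻¹ v)).symm

/-- The `P_k`-closure of a set `G` of automorphisms of `T`: all automorphisms `g` such that
for every vertex `v` and every finite set `X` of vertices at distance at most `k` from `v`,
some element of `G` agrees with `g` on `X`. -/
def pClosure (T : SimpleGraph V) (k : ℕ) (G : Set ↥(T.autGroup)) : Set ↥(T.autGroup) :=
  {g | ∀ (v : V) (X : Finset V), (∀ x ∈ X, T.dist v x ≤ k) →
    ∃ h ∈ G, ∀ x ∈ X, g.val x = h.val x}

section Helpers

variable {T : SimpleGraph V}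

lemma tree_path_length (hT : T.IsTree) {u v : V} (p : T.Walk u v) (hp : p.IsPath) :
    p.length = T.dist u v := by
  obtain ⟨q, hq, hql⟩ := hT.isConnected.exists_path_of_dist u v
  have h : (⟨p, hp⟩ : T.Path u v) = ⟨q, hq⟩ := hT.IsAcyclic.path_unique _ _
  rw [show p = q from congrArg Subtype.val h, hql]

lemma dist_le_of_mem_support [DecidableEq V] {a b u : V} {p : T.Walk a b}
    (h : u ∈ p.support) : T.dist a u ≤ p.length :=
  le_trans (dist_le (p.takeUntil u h)) (Walk.length_takeUntil_le p h)

lemma path_split [DecidableEq V] (hT : T.IsTree) {a b u : V} {p : T.Walk a b} (hp : p.IsPath)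
    (h : u ∈ p.support) : T.dist a u + T.dist u b = p.length := by
  rw [← tree_path_length hT _ (hp.takeUntil h), ← tree_path_length hT _ (hp.dropUntil h),
    ← Walk.length_append, Walk.take_spec]

lemma concat_path {a b c : V} {p : T.Walk a b} (hp : p.IsPath) (h : T.Adj b c)
    (hc : c ∉ p.support) : (p.concat h).IsPath := by
  rw [← Walk.isPath_reverse_iff, Walk.reverse_concat]
  exact hp.reverse.cons (by simpa [Walk.support_reverse] using hc)

lemma tree_dist_ne (hT : T.IsTree) {x y : V} (hxy : T.Adj x y) (w : V) :
    T.dist w x ≠ T.dist w y := by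
  classical
  intro hEq
  obtain ⟨q, hq, hl⟩ := hT.isConnected.exists_path_of_dist w y
  by_cases hx : x ∈ q.support
  · have h1 := path_split hT hq hx
    have h2 : T.dist x y = 1 := dist_eq_one_iff_adj.mpr hxy
    omega
  · have hP : (q.concat hxy.symm).IsPath := concat_path hq hxy.symm hx
    have h3 := tree_path_length hT _ hP
    rw [Walk.length_concat] at h3
    omega

lemma adj_dist_succ (hT : T.IsTree) {x y : V} (hxy : T.Adj x y) {w : V}
    (h : T.dist w x < T.dist w y) : T.dist w y = T.dist w x + 1 := by
  have t := hT.isConnected.dist_triangle (u := w) (v := x) (w := y)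
  have h2 : T.dist x y = 1 := dist_eq_one_iff_adj.mpr hxy
  omega

lemma tree_dist_lt_or (hT : T.IsTree) {x y : V} (hxy : T.Adj x y) (w : V) :
    T.dist w x < T.dist w y ∨ T.dist w y < T.dist w x :=
  lt_or_gt_of_ne (tree_dist_ne hT hxy w)

lemma cross_edge (hT : T.IsTree) {x y u v : V} (hxy : T.Adj x y) (huv : T.Adj u v)
    (hu : T.dist u x < T.dist u y) (hv : T.dist v y < T.dist v x) : u = x ∧ v = y := by
  classical
  have hconn := hT.isConnected
  have dxy : T.dist x y = 1 := dist_eq_one_iff_adj.mpr hxy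
  have duv : T.dist u v = 1 := dist_eq_one_iff_adj.mpr huv
  have dvu : T.dist v u = 1 := by
    rwa [SimpleGraph.dist_comm (G := T) (u := v) (v := u)]
  have huy : T.dist u y = T.dist u x + 1 := adj_dist_succ hT hxy hu
  have hvx : T.dist v x = T.dist v y + 1 := adj_dist_succ hT hxy.symm hv
  have hn : T.dist v y = T.dist u x := by
    have t2 := hconn.dist_triangle (u := v) (v := u) (w := x)
    have t3 := hconn.dist_triangle (u := u) (v := v) (w := y)
    omega
  obtain ⟨p, hp, hpl⟩ := hconn.exists_path_of_dist u x
  have hyp : y ∉ p.support := fun hmem => by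
    have := dist_le_of_mem_support hmem
    omega
  have P1 : (p.concat hxy).IsPath := concat_path hp hxy hyp
  obtain ⟨q, hq, hql⟩ := hconn.exists_path_of_dist v y
  have hup : u ∉ q.support := fun hmem => by
    have := path_split hT hq hmem
    omega
  have P2 : (Walk.cons huv q).IsPath := hq.cons hup
  have heq : p.concat hxy = Walk.cons huv q :=
    congrArg Subtype.val (hT.IsAcyclic.path_unique ⟨_, P1⟩ ⟨_, P2⟩)
  have hxs : x ∈ (Walk.cons huv q).support := by
    rw [← heq, Walk.support_concat]
    exact List.mem_append_left _ p.end_mem_support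
  rw [Walk.support_cons] at hxs
  rcases List.mem_cons.mp hxs with h | h
  · have hux : u = x := h.symm
    refine ⟨hux, ?_⟩
    have h0 : T.dist u x = 0 := by rw [hux]; simp
    exact hconn.dist_eq_zero_iff.mp (by omega)
  · exfalso
    have := dist_le_of_mem_support h
    omega

lemma first_step_exists (hT : T.IsTree) {v x : V} (h : v ≠ x) :
    ∃ w, T.Adj v w ∧ T.dist w x + 1 = T.dist v x := by
  obtain ⟨p, hp, hl⟩ := hT.isConnected.exists_path_of_dist v x
  cases p with
  | nil => exact absurd rfl h
  | @cons _ w _ hadj q =>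
    refine ⟨w, hadj, ?_⟩
    have h1 : T.dist w x ≤ q.length := dist_le q
    have h2 := hT.isConnected.dist_triangle (u := v) (v := w) (w := x)
    have h3 : T.dist v w = 1 := dist_eq_one_iff_adj.mpr hadj
    rw [Walk.length_cons] at hl
    omega

lemma first_step_unique (hT : T.IsTree) {v w w' x : V} (hw : T.Adj v w) (hw' : T.Adj v w')
    (h1 : T.dist w x + 1 = T.dist v x) (h2 : T.dist w' x + 1 = T.dist v x) : w = w' := by
  classical
  have hconn := hT.isConnected
  obtain ⟨p, hp, hpl⟩ := hconn.exists_path_of_dist x w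
  obtain ⟨q, hq, hql⟩ := hconn.exists_path_of_dist x w'
  have hvp : v ∉ p.support := fun hmem => by
    have h3 := dist_le_of_mem_support hmem
    rw [SimpleGraph.dist_comm (G := T) (u := x) (v := v)] at h3
    rw [SimpleGraph.dist_comm (G := T) (u := w) (v := x)] at h1
    omega
  have hvq : v ∉ q.support := fun hmem => by
    have h3 := dist_le_of_mem_support hmem
    rw [SimpleGraph.dist_comm (G := T) (u := x) (v := v)] at h3
    rw [SimpleGraph.dist_comm (G := T) (u := w') (v := x)] at h2
    omega
  have P1 : (p.concat hw.symm).IsPath := concat_path hp hw.symm hvp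
  have P2 : (q.concat hw'.symm).IsPath := concat_path hq hw'.symm hvq
  have heq : p.concat hw.symm = q.concat hw'.symm :=
    congrArg Subtype.val (hT.IsAcyclic.path_unique ⟨_, P1⟩ ⟨_, P2⟩)
  have h3 : (p.concat hw.symm).reverse.getVert 1 = w := by
    rw [Walk.reverse_concat]
    simp [Walk.getVert_cons_succ, Walk.getVert_zero]
  have h4 : (q.concat hw'.symm).reverse.getVert 1 = w' := by
    rw [Walk.reverse_concat]
    simp [Walk.getVert_cons_succ, Walk.getVert_zero]
  rw [← h3, ← h4, heq]

def autHom (g : ↥(T.autGroup)) : T →g T where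
  toFun := g.val
  map_rel' := fun {a b} h => (g.2 a b).mpr h

lemma aut_dist (hT : T.IsTree) (g : ↥(T.autGroup)) (u v : V) :
    T.dist (g.val u) (g.val v) = T.dist u v := by
  have key : ∀ (g : ↥(T.autGroup)) (u v : V), T.dist (g.val u) (g.val v) ≤ T.dist u v := by
    intro g u v
    obtain ⟨p, hl⟩ := (hT.isConnected.preconnected u v).exists_walk_length_eq_dist
    calc T.dist (g.val u) (g.val v) ≤ (p.map (autHom g)).length := dist_le _
      _ = T.dist u v := by rw [Walk.length_map, hl]
  refine le_antisymm (key g u v) ?_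
  have h2 := key g⁻¹ (g.val u) (g.val v)
  simpa using h2

lemma piecewise_perm (hT : T.IsTree) {x y : V} (hxy : T.Adj x y) (g₁ g₂ : ↥(T.autGroup))
    (h1x : g₁.val x = x) (h1y : g₁.val y = y) (h2x : g₂.val x = x) (h2y : g₂.val y = y) :
    ∃ f : ↥(T.autGroup),
      (∀ w, T.dist w x < T.dist w y → f.val w = g₁.val w) ∧
      (∀ w, ¬ T.dist w x < T.dist w y → f.val w = g₂.val w) := by
  classical
  have d1x : ∀ w, T.dist (g₁.val w) x = T.dist w x := fun w => by
    conv_lhs => rw [← h1x]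
    exact aut_dist hT g₁ w x
  have d1y : ∀ w, T.dist (g₁.val w) y = T.dist w y := fun w => by
    conv_lhs => rw [← h1y]
    exact aut_dist hT g₁ w y
  have d2x : ∀ w, T.dist (g₂.val w) x = T.dist w x := fun w => by
    conv_lhs => rw [← h2x]
    exact aut_dist hT g₂ w x
  have d2y : ∀ w, T.dist (g₂.val w) y = T.dist w y := fun w => by
    conv_lhs => rw [← h2y]
    exact aut_dist hT g₂ w y
  have di1x : ∀ w, T.dist ((g₁.val)⁻¹ w) x = T.dist w x := fun w => by
    have h := d1x ((g₁.val)⁻¹ w); rw [show (g₁.val) ((g₁.val)⁻¹ w) = w from Equiv.apply_symm_apply _ _] at h; exact h.symm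
  have di1y : ∀ w, T.dist ((g₁.val)⁻¹ w) y = T.dist w y := fun w => by
    have h := d1y ((g₁.val)⁻¹ w); rw [show (g₁.val) ((g₁.val)⁻¹ w) = w from Equiv.apply_symm_apply _ _] at h; exact h.symm
  have di2x : ∀ w, T.dist ((g₂.val)⁻¹ w) x = T.dist w x := fun w => by
    have h := d2x ((g₂.val)⁻¹ w); rw [show (g₂.val) ((g₂.val)⁻¹ w) = w from Equiv.apply_symm_apply _ _] at h; exact h.symm
  have di2y : ∀ w, T.dist ((g₂.val)⁻¹ w) y = T.dist w y := fun w => by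
    have h := d2y ((g₂.val)⁻¹ w); rw [show (g₂.val) ((g₂.val)⁻¹ w) = w from Equiv.apply_symm_apply _ _] at h; exact h.symm
  set F : V → V := fun w => if T.dist w x < T.dist w y then g₁.val w else g₂.val w with hF
  set Fi : V → V := fun w => if T.dist w x < T.dist w y then (g₁.val)⁻¹ w else (g₂.val)⁻¹ w
    with hFi
  have hFpos : ∀ w, T.dist w x < T.dist w y → F w = g₁.val w := fun w h => if_pos h
  have hFneg : ∀ w, ¬ T.dist w x < T.dist w y → F w = g₂.val w := fun w h => if_neg h
  have hFipos : ∀ w, T.dist w x < T.dist w y → Fi w = (g₁.val)⁻¹ w := fun w h => if_pos h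
  have hFineg : ∀ w, ¬ T.dist w x < T.dist w y → Fi w = (g₂.val)⁻¹ w := fun w h => if_neg h
  have hleft : Function.LeftInverse Fi F := by
    intro w
    by_cases h : T.dist w x < T.dist w y
    · rw [hFpos w h, hFipos _ (by rw [d1x, d1y]; exact h)]
      exact Equiv.symm_apply_apply _ _
    · rw [hFneg w h, hFineg _ (by rw [d2x, d2y]; exact h)]
      exact Equiv.symm_apply_apply _ _
  have hright : Function.RightInverse Fi F := by
    intro w
    by_cases h : T.dist w x < T.dist w y
    · rw [hFipos w h, hFpos _ (by rw [di1x, di1y]; exact h)]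
      exact Equiv.apply_symm_apply _ _
    · rw [hFineg w h, hFneg _ (by rw [di2x, di2y]; exact h)]
      exact Equiv.apply_symm_apply _ _
  have hmem : (⟨F, Fi, hleft, hright⟩ : Equiv.Perm V) ∈ T.autGroup := by
    intro u v
    show T.Adj (F u) (F v) ↔ T.Adj u v
    by_cases hu : T.dist u x < T.dist u y <;> by_cases hv : T.dist v x < T.dist v y
    · rw [hFpos u hu, hFpos v hv]; exact g₁.2 u v
    · rw [hFpos u hu, hFneg v hv]
      constructor
      · intro hA
        have hu' : T.dist (g₁.val u) x < T.dist (g₁.val u) y := by rw [d1x, d1y]; exact hu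
        have hv' : T.dist (g₂.val v) y < T.dist (g₂.val v) x := by
          rw [d2x, d2y]; exact (tree_dist_lt_or hT hxy v).resolve_left hv
        obtain ⟨e1, e2⟩ := cross_edge hT hxy hA hu' hv'
        have hu0 : u = x := g₁.val.injective (by rw [h1x]; exact e1)
        have hv0 : v = y := g₂.val.injective (by rw [h2y]; exact e2)
        rw [hu0, hv0]; exact hxy
      · intro hA
        have hv' := (tree_dist_lt_or hT hxy v).resolve_left hv
        obtain ⟨e1, e2⟩ := cross_edge hT hxy hA hu hv'
        rw [e1, e2, h1x, h2y]; exact hxy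
    · rw [hFneg u hu, hFpos v hv]
      constructor
      · intro hA
        have hv' : T.dist (g₁.val v) x < T.dist (g₁.val v) y := by rw [d1x, d1y]; exact hv
        have hu' : T.dist (g₂.val u) y < T.dist (g₂.val u) x := by
          rw [d2x, d2y]; exact (tree_dist_lt_or hT hxy u).resolve_left hu
        obtain ⟨e1, e2⟩ := cross_edge hT hxy hA.symm hv' hu'
        have hv0 : v = x := g₁.val.injective (by rw [h1x]; exact e1)
        have hu0 : u = y := g₂.val.injective (by rw [h2y]; exact e2)
        rw [hu0, hv0]; exact hxy.symm
      · intro hA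
        have hu' := (tree_dist_lt_or hT hxy u).resolve_left hu
        obtain ⟨e1, e2⟩ := cross_edge hT hxy hA.symm hv hu'
        rw [e1, e2, h1x, h2y]; exact hxy.symm
    · rw [hFneg u hu, hFneg v hv]; exact g₂.2 u v
  exact ⟨⟨_, hmem⟩, hFpos, hFneg⟩

end Helpers

/-- Theorem: for a closed subgroup `G` of `Aut(T)`, `G = G^{P_1}` if and only if `G` has
Tits' property `P` with respect to the edges of `T`. -/
theorem pClosed_iff_propertyP_edges
    (T : SimpleGraph V) (hT : T.IsTree) (G : Subgroup ↥(T.autGroup))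
    (hclosed : ∀ g : ↥(T.autGroup),
      (∀ X : Finset V, ∃ h ∈ G, ∀ x ∈ X, g.val x = h.val x) → g ∈ G) :
    pClosure T 1 (G : Set ↥(T.autGroup)) = (G : Set ↥(T.autGroup)) ↔
      (∀ x y : V, T.Adj x y → ∀ g₁ ∈ G, ∀ g₂ ∈ G,
        g₁.val x = x → g₁.val y = y → g₂.val x = x → g₂.val y = y →
        ∃ g ∈ G, g.val x = x ∧ g.val y = y ∧
          (∀ w : V, T.dist w x < T.dist w y → g.val w = g₁.val w) ∧
          (∀ w : V, T.dist w y < T.dist w x → g.val w = g₂.val w)) := by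
  classical
  constructor
  · intro hcl x y hxy g₁ hg₁ g₂ hg₂ h1x h1y h2x h2y
    obtain ⟨f, hf1, hf2⟩ := piecewise_perm hT hxy g₁ g₂ h1x h1y h2x h2y
    have dxy : T.dist x y = 1 := dist_eq_one_iff_adj.mpr hxy
    have dyx : T.dist y x = 1 := by
      rwa [SimpleGraph.dist_comm (G := T) (u := y) (v := x)]
    have hfx : f.val x = x := by
      rw [hf1 x (by simp [dxy])]
      exact h1x
    have hfy : f.val y = y := by
      rw [hf2 y (by simp [dyx, SimpleGraph.dist_self])]
      exact h2y
    have hpc : f ∈ pClosure T 1 (G : Set ↥(T.autGroup)) := by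
      intro v X hX
      by_cases hv : T.dist v x < T.dist v y
      · refine ⟨g₁, hg₁, fun z hz => ?_⟩
        by_cases hzc : T.dist z x < T.dist z y
        · exact hf1 z hzc
        · have hz' := (tree_dist_lt_or hT hxy z).resolve_left hzc
          have hzv : z ≠ v := fun h => by rw [h] at hz'; omega
          have hdz := hX z hz
          have hne : T.dist v z ≠ 0 := fun h0 =>
            hzv ((hT.isConnected.dist_eq_zero_iff.mp h0).symm)
          have hadj : T.Adj v z := dist_eq_one_iff_adj.mp (by omega)
          obtain ⟨e1, e2⟩ := cross_edge hT hxy hadj hv hz'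
          rw [hf2 z hzc, e2, h2y, h1y]
      · refine ⟨g₂, hg₂, fun z hz => ?_⟩
        by_cases hzc : T.dist z x < T.dist z y
        · have hv' := (tree_dist_lt_or hT hxy v).resolve_left hv
          have hzv : z ≠ v := fun h => by rw [h] at hzc; omega
          have hdz := hX z hz
          have hne : T.dist v z ≠ 0 := fun h0 =>
            hzv ((hT.isConnected.dist_eq_zero_iff.mp h0).symm)
          have hadj : T.Adj v z := dist_eq_one_iff_adj.mp (by omega)
          obtain ⟨e1, e2⟩ := cross_edge hT hxy hadj.symm hzc hv'
          rw [hf1 z hzc, e1, h1x, h2x]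
        · exact hf2 z hzc
    have hfG : f ∈ G := by rw [hcl] at hpc; exact hpc
    exact ⟨f, hfG, hfx, hfy, hf1, fun w hw => hf2 w (by omega)⟩
  · intro hP
    apply Set.Subset.antisymm
    · intro g hg
      apply hclosed
      have key : ∀ n (v : V) (Y : Finset V), (∀ z ∈ Y, T.dist v z ≤ n + 1) →
          ∃ h ∈ G, ∀ z ∈ Y, g.val z = h.val z := by
        intro n
        induction n with
        | zero => intro v Y hY; exact hg v Y hY
        | succ n ih =>
          intro v Y hY
          have exw : ∀ z : V, z ≠ v → ∃ w, T.Adj v w ∧ T.dist w z + 1 = T.dist v z :=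
            fun z h => first_step_exists hT (Ne.symm h)
          set wf : V → V := fun z => if h : z ≠ v then Classical.choose (exw z h) else v
            with hwf
          have wf_spec : ∀ z (h : z ≠ v),
              T.Adj v (wf z) ∧ T.dist (wf z) z + 1 = T.dist v z := by
            intro z h
            have heq : wf z = Classical.choose (exw z h) := by
              simp only [hwf]
              exact dif_pos h
            rw [heq]
            exact Classical.choose_spec (exw z h)
          set W : Finset V := (Y.filter (· ≠ v)).image wf with hW
          have hWadj : ∀ w ∈ W, T.Adj v w := by
            intro w hw
            rw [hW] at hw
            obtain ⟨z, hz, rfl⟩ := Finset.mem_image.mp hw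
            exact (wf_spec z (Finset.mem_filter.mp hz).2).1
          have inner : ∀ A : Finset V, A ⊆ W →
              ∃ c, c ∈ G ∧ c.val v = g.val v ∧ (∀ w ∈ W, c.val w = g.val w) ∧
                (∀ z ∈ Y, z ≠ v → wf z ∈ A → c.val z = g.val z) := by
            intro A
            induction A using Finset.induction_on with
            | empty =>
              intro _
              obtain ⟨c, hcG, hc⟩ := hg v (insert v W) (by
                intro z hz
                rcases Finset.mem_insert.mp hz with rfl | hz
                · simp [SimpleGraph.dist_self]
                · exact le_of_eq (dist_eq_one_iff_adj.mpr (hWadj z hz)))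
              exact ⟨c, hcG, (hc v (Finset.mem_insert_self _ _)).symm,
                fun w hw => (hc w (Finset.mem_insert_of_mem hw)).symm,
                fun z _ _ h => absurd h (Finset.notMem_empty _)⟩
            | @insert w A hwA ihA =>
              intro hsub
              have hASub : A ⊆ W := fun a ha => hsub (Finset.mem_insert_of_mem ha)
              obtain ⟨c, hcG, hcv, hcW, hcX⟩ := ihA hASub
              have hwW : w ∈ W := hsub (Finset.mem_insert_self _ _)
              have hadj : T.Adj v w := hWadj w hwW
              set Xw : Finset V :=
                insert v (insert w (Y.filter (fun z => z ≠ v ∧ wf z = w))) with hXw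
              have hXwd : ∀ z ∈ Xw, T.dist w z ≤ n + 1 := by
                intro z hz
                rw [hXw] at hz
                rcases Finset.mem_insert.mp hz with rfl | hz
                · have h1 : T.dist w z = 1 := by
                    rw [SimpleGraph.dist_comm (G := T) (u := w) (v := z)]
                    exact dist_eq_one_iff_adj.mpr hadj
                  omega
                · rcases Finset.mem_insert.mp hz with rfl | hz
                  · simp [SimpleGraph.dist_self]
                  · have hmf := Finset.mem_filter.mp hz
                    have hzY := hmf.1
                    have hzv := hmf.2.1
                    have hzw := hmf.2.2
                    have hs := (wf_spec z hzv).2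
                    rw [hzw] at hs
                    have hY2 := hY z hzY
                    omega
              obtain ⟨hw_, hhwG, hhw⟩ := ih w Xw hXwd
              have hcvw : c.val w = g.val w := hcW w hwW
              have hhwv : hw_.val v = g.val v :=
                (hhw v (by rw [hXw]; exact Finset.mem_insert_self _ _)).symm
              have hhww : hw_.val w = g.val w :=
                (hhw w (by
                  rw [hXw]
                  exact Finset.mem_insert_of_mem (Finset.mem_insert_self _ _))).symm
              have hfix_v : (c⁻¹ * hw_).val v = v := by
                show (c.val)⁻¹ (hw_.val v) = v
                rw [hhwv, ← hcv]
                exact Equiv.symm_apply_apply _ _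
              have hfix_w : (c⁻¹ * hw_).val w = w := by
                show (c.val)⁻¹ (hw_.val w) = w
                rw [hhww, ← hcvw]
                exact Equiv.symm_apply_apply _ _
              obtain ⟨e, heG, hev, hew, he1, he2⟩ :=
                hP v w hadj 1 (one_mem G) (c⁻¹ * hw_) (mul_mem (inv_mem hcG) hhwG)
                  rfl rfl hfix_v hfix_w
              refine ⟨c * e, mul_mem hcG heG, ?_, ?_, ?_⟩
              · show c.val (e.val v) = g.val v
                rw [hev]; exact hcv
              · intro w' hw'
                by_cases hww' : w' = w
                · subst hww'
                  show c.val (e.val w') = g.val w'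
                  rw [hew]
                  exact hcW w' hw'
                · have hvw' : T.dist w' v = 1 := by
                    rw [SimpleGraph.dist_comm (G := T) (u := w') (v := v)]
                    exact dist_eq_one_iff_adj.mpr (hWadj w' hw')
                  have hnadj : ¬ T.Adj w' w := fun hA => by
                    have hne := tree_dist_ne hT hA v
                    have d1 : T.dist v w' = 1 := dist_eq_one_iff_adj.mpr (hWadj w' hw')
                    have d2 : T.dist v w = 1 := dist_eq_one_iff_adj.mpr hadj
                    exact hne (by rw [d1, d2])
                  have hw'w2 : T.dist w' w = 2 := by
                    have t := hT.isConnected.dist_triangle (u := w') (v := v) (w := w)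
                    have d2 : T.dist v w = 1 := dist_eq_one_iff_adj.mpr hadj
                    have hne0 : T.dist w' w ≠ 0 := fun h0 =>
                      hww' (hT.isConnected.dist_eq_zero_iff.mp h0)
                    have hne1 : T.dist w' w ≠ 1 := fun h1 =>
                      hnadj (dist_eq_one_iff_adj.mp h1)
                    omega
                  have hez : e.val w' = w' := by
                    have h := he1 w' (by rw [hvw', hw'w2]; omega)
                    simpa using h
                  show c.val (e.val w') = g.val w'
                  rw [hez]
                  exact hcW w' hw'
              · intro z hzY hzv hzA
                by_cases hwz : wf z = w
                · have hs := (wf_spec z hzv).2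
                  rw [hwz] at hs
                  have hzw_lt : T.dist z w < T.dist z v := by
                    rw [SimpleGraph.dist_comm (G := T) (u := z) (v := w),
                      SimpleGraph.dist_comm (G := T) (u := z) (v := v)]
                    omega
                  have hez := he2 z hzw_lt
                  show c.val (e.val z) = g.val z
                  rw [hez]
                  show c.val ((c.val)⁻¹ (hw_.val z)) = g.val z
                  rw [show c.val ((c.val)⁻¹ (hw_.val z)) = hw_.val z from Equiv.apply_symm_apply _ _]
                  exact (hhw z (by
                    rw [hXw]
                    exact Finset.mem_insert_of_mem (Finset.mem_insert_of_mem
                      (Finset.mem_filter.mpr ⟨hzY, hzv, hwz⟩)))).symm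
                · have hzA' : wf z ∈ A := by
                    rcases Finset.mem_insert.mp hzA with h | h
                    · exact absurd h hwz
                    · exact h
                  have hza := hcX z hzY hzv hzA'
                  have hsw := wf_spec z hzv
                  have hlt : T.dist z v < T.dist z w := by
                    rcases tree_dist_lt_or hT hadj z with h | h
                    · exact h
                    · exfalso
                      have h' : T.dist w z + 1 = T.dist v z := by
                        have h2 := adj_dist_succ hT hadj.symm h
                        rw [SimpleGraph.dist_comm (G := T) (u := w) (v := z),
                          SimpleGraph.dist_comm (G := T) (u := v) (v := z)]
                        omega
                      exact hwz (first_step_unique hT hadj hsw.1 h' hsw.2).symm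
                  have hez : e.val z = z := by
                    have h := he1 z hlt
                    simpa using h
                  show c.val (e.val z) = g.val z
                  rw [hez]
                  exact hza
          obtain ⟨c, hcG, hcv, hcW, hcX⟩ := inner W (Finset.Subset.refl W)
          refine ⟨c, hcG, fun z hz => ?_⟩
          by_cases hzv : z = v
          · subst hzv; exact hcv.symm
          · have hm : wf z ∈ W := by
              rw [hW]
              exact Finset.mem_image_of_mem wf (Finset.mem_filter.mpr ⟨hz, hzv⟩)
            exact (hcX z hz hzv hm).symm
      intro X
      obtain ⟨v₀⟩ := hT.isConnected.nonempty
      exact key (X.sup (fun z => T.dist v₀ z)) v₀ X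
        (fun z hz => le_trans (Finset.le_sup hz) (Nat.le_succ _))
    · intro g hg v X hX
      exact ⟨g, hg, fun z _ => rfl⟩
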